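/- Let V be a commutative ring and m ⊆ V an ideal satisfying m·m = m, and write m̃ = m ⊗_V m. For a V-module M let μ_M : m̃ ⊗_V M → M be the V-linear map determined by x ⊗ y ⊗ s ↦ (xy)·s. Then μ_M is an almost isomorphism, and for every V-linear map φ : N → M which is an almost isomorphism there exists a unique V-linear map ψ : m̃ ⊗_V M → N with φ ∘ ψ = μ_M. -/

import Mathlib

open TensorProduct

/-- The multiplication map `m ⊗_V m → V`, `x ⊗ y ↦ x·y`. -/
noncomputable def tensorMul {V : Type*} [CommRing V] (m : Ideal V) :
    TensorProduct V m m →ₗ[V] V :=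
  TensorProduct.lift ((LinearMap.mul V V).compl₁₂ m.subtype m.subtype)

/-- For a `V`-module `M`, the map `μ_M : (m ⊗_V m) ⊗_V M → M` determined by
`x ⊗ y ⊗ s ↦ (x·y) • s`. -/
noncomputable def muMap {V : Type*} [CommRing V] (m : Ideal V)
    (M : Type*) [AddCommGroup M] [Module V M] :
    TensorProduct V (TensorProduct V m m) M →ₗ[V] M :=
  TensorProduct.lift ((LinearMap.lsmul V M).comp (tensorMul m))

/-- A linear map of `V`-modules is an almost isomorphism (w.r.t. the ideal `m`) if its
kernel and cokernel are killed by `m`. -/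
def IsAlmostIsomorphism {V : Type*} [CommRing V] (m : Ideal V)
    {N M : Type*} [AddCommGroup N] [Module V N]
    [AddCommGroup M] [Module V M] (φ : N →ₗ[V] M) : Prop :=
  (∀ a ∈ m, ∀ x ∈ LinearMap.ker φ, a • x = 0) ∧
    (∀ a ∈ m, ∀ y : M, a • y ∈ LinearMap.range φ)

section Aux

variable {V : Type*} [CommRing V] {m : Ideal V}
  {M : Type*} [AddCommGroup M] [Module V M]

lemma muMap_tmul (x y : m) (s : M) :
    muMap m M ((x ⊗ₜ y) ⊗ₜ s) = ((x : V) * (y : V)) • s := by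
  simp [muMap, tensorMul]

lemma smul_eq_tmul_muMap (x y : m) (t : TensorProduct V (TensorProduct V m m) M) :
    ((x : V) * (y : V)) • t = (x ⊗ₜ y) ⊗ₜ muMap m M t := by
  induction t using TensorProduct.induction_on with
  | zero => simp
  | add a b ha hb => rw [smul_add, map_add, tmul_add, ha, hb]
  | tmul p s =>
    induction p using TensorProduct.induction_on with
    | zero => simp
    | add p q hp hq => rw [add_tmul, smul_add, hp, hq, map_add, tmul_add]
    | tmul u v =>
      have h1 : ((x : V) * (y : V)) • (u ⊗ₜ[V] v) = ((x : V) • u) ⊗ₜ[V] ((y : V) • v) := by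
        rw [mul_smul, ← tmul_smul, smul_tmul']
      have h2 : ((u : V) * (v : V)) • (x ⊗ₜ[V] y) = ((u : V) • x) ⊗ₜ[V] ((v : V) • y) := by
        rw [mul_smul, ← tmul_smul, smul_tmul']
      rw [muMap_tmul, tmul_smul, smul_tmul' ((x : V) * (y : V)) (u ⊗ₜ[V] v) s,
        smul_tmul' ((u : V) * (v : V)) (x ⊗ₜ[V] y) s, h1, h2]
      congr 1
      congr 1 <;> exact Subtype.ext (by simp [mul_comm])

/-- If all values of `δ` are killed by `m`, then `δ = 0`. -/
lemma eq_zero_of_m_kills (hm : m * m = m)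
    {N : Type*} [AddCommGroup N] [Module V N]
    (δ : TensorProduct V (TensorProduct V m m) M →ₗ[V] N)
    (hδ : ∀ a ∈ m, ∀ t, a • δ t = 0) : δ = 0 := by
  have key : ∀ t, δ t = 0 := by
    intro t
    induction t using TensorProduct.induction_on with
    | zero => simp
    | add a b ha hb => rw [map_add, ha, hb, add_zero]
    | tmul p s =>
      induction p using TensorProduct.induction_on with
      | zero => simp
      | add p q hp hq => rw [add_tmul, map_add, hp, hq, add_zero]
      | tmul u v =>
        have hu : (u : V) ∈ m * m := by rw [hm]; exact u.2
        have main : ∀ (a : V) (ha : a ∈ m * m),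
            δ (((⟨a, hm ▸ ha⟩ : m) ⊗ₜ[V] v) ⊗ₜ[V] s) = 0 := by
          intro a ha
          induction ha using Submodule.mul_induction_on' with
          | mem_mul_mem p hp q hq =>
            have e : (⟨p * q, hm ▸ Submodule.mul_mem_mul hp hq⟩ : m)
                = p • (⟨q, hq⟩ : m) := Subtype.ext rfl
            rw [e, ← smul_tmul', ← smul_tmul', map_smul, hδ p hp]
          | add x hx y hy ihx ihy =>
            have e : (⟨x + y, hm ▸ add_mem hx hy⟩ : m)
                = (⟨x, hm ▸ hx⟩ : m) + (⟨y, hm ▸ hy⟩ : m) := Subtype.ext rfl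
            rw [e, add_tmul, add_tmul, map_add, ihx, ihy, add_zero]
        exact main u hu
  exact LinearMap.ext key

section Lift

variable {N : Type*} [AddCommGroup N] [Module V N] (φ : N →ₗ[V] M)

/-- A choice of almost-preimage: `φ (almostLiftAux φ hφ y s) = y • s`. -/
noncomputable def almostLiftAux (hφ : IsAlmostIsomorphism m φ) (y : m) (s : M) : N :=
  (LinearMap.mem_range.mp (hφ.2 (y : V) y.2 s)).choose

lemma almostLiftAux_spec (hφ : IsAlmostIsomorphism m φ) (y : m) (s : M) :
    φ (almostLiftAux φ hφ y s) = (y : V) • s :=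
  (LinearMap.mem_range.mp (hφ.2 (y : V) y.2 s)).choose_spec

lemma smul_eq_of_apply_eq (hφ : IsAlmostIsomorphism m φ) {a : V} (ha : a ∈ m)
    {n n' : N} (h : φ n = φ n') : a • n = a • n' := by
  have h0 : φ (n - n') = 0 := by rw [map_sub, h, sub_self]
  have h1 := hφ.1 a ha (n - n') (LinearMap.mem_ker.mpr h0)
  rw [smul_sub] at h1
  exact sub_eq_zero.mp h1

/-- The lift `ψ : m̃ ⊗ M → N` with `φ ∘ ψ = μ_M`. -/
noncomputable def almostLift (hφ : IsAlmostIsomorphism m φ) :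
    TensorProduct V (TensorProduct V m m) M →ₗ[V] N :=
  TensorProduct.lift (TensorProduct.lift
    { toFun := fun x =>
        { toFun := fun y =>
            { toFun := fun s => (x : V) • almostLiftAux φ hφ y s
              map_add' := by
                intro s t
                have h : φ (almostLiftAux φ hφ y (s + t))
                    = φ (almostLiftAux φ hφ y s + almostLiftAux φ hφ y t) := by
                  rw [map_add, almostLiftAux_spec, almostLiftAux_spec, almostLiftAux_spec,
                    smul_add]
                rw [smul_eq_of_apply_eq φ hφ x.2 h, smul_add]
              map_smul' := by
                intro c s
                have h : φ (almostLiftAux φ hφ y (c • s))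
                    = φ (c • almostLiftAux φ hφ y s) := by
                  rw [map_smul, almostLiftAux_spec, almostLiftAux_spec, smul_comm]
                rw [smul_eq_of_apply_eq φ hφ x.2 h, RingHom.id_apply, smul_comm] }
          map_add' := by
            intro y y'
            ext s
            simp only [LinearMap.coe_mk, AddHom.coe_mk, LinearMap.add_apply]
            have h : φ (almostLiftAux φ hφ (y + y') s)
                = φ (almostLiftAux φ hφ y s + almostLiftAux φ hφ y' s) := by
              rw [map_add, almostLiftAux_spec, almostLiftAux_spec, almostLiftAux_spec,
                Submodule.coe_add, add_smul]
            rw [smul_eq_of_apply_eq φ hφ x.2 h, smul_add]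
          map_smul' := by
            intro c y
            ext s
            simp only [LinearMap.coe_mk, AddHom.coe_mk, RingHom.id_apply,
              LinearMap.smul_apply]
            have h : φ (almostLiftAux φ hφ (c • y) s)
                = φ (c • almostLiftAux φ hφ y s) := by
              rw [map_smul, almostLiftAux_spec, almostLiftAux_spec, Submodule.coe_smul,
                smul_assoc]
            rw [smul_eq_of_apply_eq φ hφ x.2 h, smul_comm] }
      map_add' := by
        intro x x'
        ext y s
        simp only [LinearMap.coe_mk, AddHom.coe_mk, LinearMap.add_apply,
          Submodule.coe_add, add_smul]
      map_smul' := by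
        intro c x
        ext y s
        simp only [LinearMap.coe_mk, AddHom.coe_mk, RingHom.id_apply,
          LinearMap.smul_apply, Submodule.coe_smul, smul_assoc] })

lemma almostLift_comp (hφ : IsAlmostIsomorphism m φ) :
    φ.comp (almostLift φ hφ) = muMap m M := by
  apply TensorProduct.ext
  apply TensorProduct.ext
  ext x y s
  simp only [LinearMap.compr₂_apply, LinearMap.compr₂ₛₗ_apply, TensorProduct.mk_apply, LinearMap.comp_apply,
    almostLift, TensorProduct.lift.tmul, LinearMap.coe_mk, AddHom.coe_mk]
  rw [map_smul, almostLiftAux_spec, muMap_tmul, smul_smul]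

end Lift

end Aux

theorem muMap_isAlmostIsomorphism_and_lifts
    {V : Type*} [CommRing V] (m : Ideal V) (hm : m * m = m)
    (M : Type*) [AddCommGroup M] [Module V M] :
    IsAlmostIsomorphism (N := TensorProduct V (TensorProduct V m m) M) (M := M) m (muMap m M) ∧
      ∀ (N : Type*) [AddCommGroup N] [Module V N] (φ : N →ₗ[V] M),
        IsAlmostIsomorphism m φ →
          ∃! ψ : TensorProduct V (TensorProduct V m m) M →ₗ[V] N,
            φ.comp ψ = muMap m M := by
  constructor
  · constructor
    · intro a ha z hz
      rw [LinearMap.mem_ker] at hz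
      have ha' : a ∈ m * m := by rw [hm]; exact ha
      refine Submodule.mul_induction_on ha' (fun x hx y hy => ?_) (fun b c hb hc => ?_)
      · have h := smul_eq_tmul_muMap (⟨x, hx⟩ : m) (⟨y, hy⟩ : m) z
        rw [hz, TensorProduct.tmul_zero] at h
        exact h
      · rw [add_smul, hb, hc, add_zero]
    · intro a ha y
      have ha' : a ∈ m * m := by rw [hm]; exact ha
      refine Submodule.mul_induction_on ha' (fun x hx y' hy' => ?_) (fun b c hb hc => ?_)
      · exact ⟨((⟨x, hx⟩ : m) ⊗ₜ (⟨y', hy'⟩ : m)) ⊗ₜ y, muMap_tmul _ _ _⟩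
      · rw [add_smul]
        exact add_mem hb hc
  · intro N _ _ φ hφ
    refine ⟨almostLift φ hφ, almostLift_comp φ hφ, ?_⟩
    intro ψ' hψ'
    have hδ : ∀ a ∈ m, ∀ t, a • (ψ' - almostLift φ hφ) t = 0 := by
      intro a ha t
      have h0 : φ ((ψ' - almostLift φ hφ) t) = 0 := by
        rw [LinearMap.sub_apply, map_sub, ← LinearMap.comp_apply, ← LinearMap.comp_apply,
          hψ', almostLift_comp φ hφ, sub_self]
      exact hφ.1 a ha _ (LinearMap.mem_ker.mpr h0)
    have h := eq_zero_of_m_kills hm _ hδ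
    exact sub_eq_zero.mp h
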